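/- Let i ≥ 1, let w be a word belonging to J_l for some l ≥ 1, and let c_1, ..., c_i be letters with c_j ≠ a_1 for every 1 ≤ j ≤ i. Then β_{i+4}(w c_1 ⋯ c_i) = i + 3. (Lemma 5.5(iii) of the paper.) -/

import Mathlib

/-- The Jacquard languages: `Jacquard 0 = {ε}`, `Jacquard 1 = {a₀}`, and, for `n ≥ 2`,
`Jacquard n = Jacquard (n-1)·a₀ ∪ ⋃_{1 ≤ j ≤ n-1} Jacquard (n-j)·(a₁a₂⋯a_j)`,
where a letter `a_j` is modeled by the natural number `j` and a word by a list. -/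
def Jacquard : ℕ → Set (List ℕ)
  | 0 => {[]}
  | 1 => {[0]}
  | n + 2 =>
      ((· ++ [0]) '' Jacquard (n + 1)) ∪
        ⋃ (j : ℕ) (_ : 1 ≤ j ∧ j ≤ n + 1),
          (· ++ (List.range j).map (· + 1)) '' Jacquard (n + 2 - j)
  termination_by n => n
  decreasing_by all_goals omega

/-- Jean's functions `β_i` on words (the shift `w'` of a word is `w.dropLast`):
`β₂ = 1`, `β₃ = 2`, `β₄ = 3`, and, for `i ≥ 5`,
`β_i(w) = β_{i-1}(w') + β_{i-2}(w'')` if the last letter of `w` is `a₁`,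
`β_i(w) = 2β_{i-1}(w') - β_{i-2}(w'')` if the last letter of `w` is `a_k`, `k ≥ 2`,
`β_i(w) = β_{i-1}(w') + 1` otherwise (i.e. `w` empty or ending with `a₀`).
(The unused values `β₀` and `β₁` are set to `0`.) -/
def beta : ℕ → List ℕ → ℤ
  | 0, _ => 0
  | 1, _ => 0
  | 2, _ => 1
  | 3, _ => 2
  | 4, _ => 3
  | i + 5, w =>
      match w.getLast? with
      | some 1 => beta (i + 4) w.dropLast + beta (i + 3) w.dropLast.dropLast
      | some (_ + 2) => 2 * beta (i + 4) w.dropLast - beta (i + 3) w.dropLast.dropLast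
      | _ => beta (i + 4) w.dropLast + 1

lemma beta_aux : ∀ i (u c : List ℕ), c.length = i → (∀ x ∈ c, x ≠ 1) →
    beta (i + 4) (u ++ c) = (i : ℤ) + 3 := by
  intro i
  induction i using Nat.strong_induction_on with
  | _ i ih =>
    intro u c hlen h1
    match i with
    | 0 =>
      rw [List.length_eq_zero_iff] at hlen
      subst hlen
      simp [beta]
    | n + 1 =>
      have hc : c ≠ [] := by rintro rfl; simp at hlen
      rcases c.eq_nil_or_concat with h' | ⟨d, a, rfl⟩
      · exact absurd h' hc
      rw [List.concat_eq_append] at *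
      have hd : d.length = n := by simpa using hlen
      have hd1 : ∀ x ∈ d, x ≠ 1 := fun x hx => h1 x (by simp [hx])
      have ha : a ≠ 1 := h1 a (by simp)
      rw [← List.append_assoc]
      show beta (n + 5) _ = _
      rw [beta]
      rw [List.getLast?_concat, List.dropLast_concat]
      match a with
      | 0 =>
        rw [ih n (by omega) u d hd hd1]
        push_cast; ring
      | 1 => exact absurd rfl ha
      | k + 2 =>
        rw [ih n (by omega) u d hd hd1]
        match n with
        | 0 =>
          rw [List.length_eq_zero_iff] at hd
          subst hd
          show 2 * _ - beta 3 _ = _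
          norm_num [beta]
        | m + 1 =>
          have hd' : d ≠ [] := by rintro rfl; simp at hd
          rw [List.dropLast_append_of_ne_nil hd',
            ih m (by omega) u d.dropLast (by simp [List.length_dropLast, hd])
              (fun x hx => hd1 x (List.dropLast_subset _ hx))]
          push_cast; ring

/-- Lemma 5.5(iii): for `i ≥ 1`, any word `w` in some Jacquard language `J_l`, `l ≥ 1`,
and any letters `c₁, …, c_i` all different from `a₁`, `β_{i+4}(w c₁⋯c_i) = i + 3`. -/
theorem beta_append_no_ones (i : ℕ) (hi : 1 ≤ i) (l : ℕ) (hl : 1 ≤ l)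
    (w : List ℕ) (hw : w ∈ Jacquard l)
    (c : List ℕ) (hc : c.length = i) (hc1 : ∀ x ∈ c, x ≠ 1) :
    beta (i + 4) (w ++ c) = (i : ℤ) + 3 := beta_aux i w c hc hc1
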